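/- Let d ≥ 2 be an integer. For z = (z₁, …, z_d) ∈ ℝ^d with z_d > 0 and r_{d−1} := (z₁² + ⋯ + z_{d−1}²)^{1/2} > 0, setting r_d := (z₁² + ⋯ + z_d²)^{1/2}, the sum of the second partial derivatives satisfies (∂²/∂z₁² + ⋯ + ∂²/∂z_d²) arsinh(r_{d−1}/z_d) = ((d−2)z_d² + r_{d−1}²) / (z_d² · r_{d−1} · r_d). -/

import Mathlib

open Real Finset


-- First derivative, last-coordinate case
lemma derivA (r : ℝ) (hr : 0 < r) {t : ℝ} (ht : 0 < t) :
    HasDerivAt (fun t : ℝ => Real.arsinh (r / t))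
      (-r / (t * Real.sqrt (t ^ 2 + r ^ 2))) t := by
  have h1 : HasDerivAt (fun t : ℝ => r / t) (-(r / t ^ 2)) t := by
    simpa [div_eq_mul_inv, mul_comm] using ((hasDerivAt_inv ht.ne').const_mul r)
  have h2 := (Real.hasDerivAt_arsinh (r / t)).comp t h1
  refine h2.congr_deriv ?_
  have hs : Real.sqrt (1 + (r / t) ^ 2) = Real.sqrt (t ^ 2 + r ^ 2) / t := by
    rw [eq_div_iff ht.ne', ← Real.sqrt_sq ht.le, ← Real.sqrt_mul (by positivity)]
    congr 1
    field_simp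
    rw [Real.sq_sqrt (by positivity)]
  rw [hs]
  have hst : 0 < Real.sqrt (t ^ 2 + r ^ 2) := Real.sqrt_pos.2 (by positivity)
  field_simp

lemma derivA2 (r h : ℝ) (hr : 0 < r) (hh : 0 < h) :
    deriv (deriv (fun t : ℝ => Real.arsinh (r / t))) h
      = r * (2 * h ^ 2 + r ^ 2) / (h ^ 2 * Real.sqrt (h ^ 2 + r ^ 2) ^ 3) := by
  have hev : deriv (fun t : ℝ => Real.arsinh (r / t))
      =ᶠ[nhds h] fun t => -r / (t * Real.sqrt (t ^ 2 + r ^ 2)) := by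
    filter_upwards [IsOpen.mem_nhds isOpen_Ioi hh] with t ht
    exact (derivA r hr ht).deriv
  rw [hev.deriv_eq]
  have hB : (0:ℝ) < h ^ 2 + r ^ 2 := by positivity
  have hsB : 0 < Real.sqrt (h ^ 2 + r ^ 2) := Real.sqrt_pos.2 hB
  have hsq : HasDerivAt (fun t : ℝ => Real.sqrt (t ^ 2 + r ^ 2))
      (h / Real.sqrt (h ^ 2 + r ^ 2)) h := by
    have h1 : HasDerivAt (fun t : ℝ => t ^ 2 + r ^ 2) (2 * h) h := by
      simpa using ((hasDerivAt_pow 2 h).add_const (r ^ 2))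
    have h2 := (Real.hasDerivAt_sqrt hB.ne').comp h h1
    refine h2.congr_deriv ?_
    field_simp
  have hg : HasDerivAt (fun t : ℝ => t * Real.sqrt (t ^ 2 + r ^ 2))
      ((2 * h ^ 2 + r ^ 2) / Real.sqrt (h ^ 2 + r ^ 2)) h := by
    have := (hasDerivAt_id h).mul hsq
    refine this.congr_deriv ?_
    have : Real.sqrt (h ^ 2 + r ^ 2) ^ 2 = h ^ 2 + r ^ 2 := Real.sq_sqrt hB.le
    field_simp
    simp only [id]
    nlinarith [this]
  have hgne : h * Real.sqrt (h ^ 2 + r ^ 2) ≠ 0 := by positivity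
  have hfull : HasDerivAt (fun t : ℝ => -r / (t * Real.sqrt (t ^ 2 + r ^ 2)))
      (r * (2 * h ^ 2 + r ^ 2) / (h ^ 2 * Real.sqrt (h ^ 2 + r ^ 2) ^ 3)) h := by
    have := (hasDerivAt_const h (-r)).div hg hgne
    refine this.congr_deriv ?_
    have hs2 : Real.sqrt (h ^ 2 + r ^ 2) ^ 2 = h ^ 2 + r ^ 2 := Real.sq_sqrt hB.le
    field_simp
    linear_combination (0:ℝ) * hs2
  exact hfull.deriv

lemma derivB (c h : ℝ) (hc : 0 ≤ c) (hh : 0 < h) {s : ℝ} (hs : 0 < c + s ^ 2) :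
    HasDerivAt (fun t : ℝ => Real.arsinh (Real.sqrt (c + t ^ 2) / h))
      (s / (Real.sqrt (c + s ^ 2) * Real.sqrt (h ^ 2 + (c + s ^ 2)))) s := by
  have hA : 0 < Real.sqrt (c + s ^ 2) := Real.sqrt_pos.2 hs
  have hB : (0:ℝ) < h ^ 2 + (c + s ^ 2) := by positivity
  have hsB : 0 < Real.sqrt (h ^ 2 + (c + s ^ 2)) := Real.sqrt_pos.2 hB
  have h1 : HasDerivAt (fun t : ℝ => c + t ^ 2) (2 * s) s := by
    simpa using ((hasDerivAt_pow 2 s).const_add c)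
  have h2 : HasDerivAt (fun t : ℝ => Real.sqrt (c + t ^ 2))
      (s / Real.sqrt (c + s ^ 2)) s := by
    have := (Real.hasDerivAt_sqrt hs.ne').comp s h1
    refine this.congr_deriv ?_
    field_simp
  have h3 : HasDerivAt (fun t : ℝ => Real.sqrt (c + t ^ 2) / h)
      (s / Real.sqrt (c + s ^ 2) / h) s := h2.div_const h
  have h4 := (Real.hasDerivAt_arsinh (Real.sqrt (c + s ^ 2) / h)).comp s h3
  refine h4.congr_deriv ?_
  have key : Real.sqrt (1 + (Real.sqrt (c + s ^ 2) / h) ^ 2)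
      = Real.sqrt (h ^ 2 + (c + s ^ 2)) / h := by
    rw [eq_div_iff hh.ne', ← Real.sqrt_sq hh.le, ← Real.sqrt_mul (by positivity)]
    congr 1
    rw [div_pow, Real.sq_sqrt hs.le]
    field_simp
    rw [Real.sq_sqrt (by positivity)]
  rw [key]
  field_simp

lemma derivB2 (c h : ℝ) (hc : 0 ≤ c) (hh : 0 < h) {t : ℝ} (ht : 0 < c + t ^ 2) :
    deriv (deriv (fun t : ℝ => Real.arsinh (Real.sqrt (c + t ^ 2) / h))) t
      = ((c + t ^ 2) * (h ^ 2 + (c + t ^ 2)) - t ^ 2 * (h ^ 2 + (c + t ^ 2))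
          - t ^ 2 * (c + t ^ 2))
        / (Real.sqrt (c + t ^ 2) ^ 3 * Real.sqrt (h ^ 2 + (c + t ^ 2)) ^ 3) := by
  have hopen : IsOpen {s : ℝ | 0 < c + s ^ 2} :=
    isOpen_lt continuous_const (by continuity)
  have hev : deriv (fun t : ℝ => Real.arsinh (Real.sqrt (c + t ^ 2) / h))
      =ᶠ[nhds t] fun s => s / (Real.sqrt (c + s ^ 2) * Real.sqrt (h ^ 2 + (c + s ^ 2))) := by
    filter_upwards [hopen.mem_nhds ht] with s hs
    exact (derivB c h hc hh hs).deriv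
  rw [hev.deriv_eq]
  have hA : (0:ℝ) < c + t ^ 2 := ht
  have hB : (0:ℝ) < h ^ 2 + (c + t ^ 2) := by positivity
  have hsA : 0 < Real.sqrt (c + t ^ 2) := Real.sqrt_pos.2 hA
  have hsB : 0 < Real.sqrt (h ^ 2 + (c + t ^ 2)) := Real.sqrt_pos.2 hB
  have hA2 : Real.sqrt (c + t ^ 2) ^ 2 = c + t ^ 2 := Real.sq_sqrt hA.le
  have hB2 : Real.sqrt (h ^ 2 + (c + t ^ 2)) ^ 2 = h ^ 2 + (c + t ^ 2) := Real.sq_sqrt hB.le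
  have hda : HasDerivAt (fun s : ℝ => Real.sqrt (c + s ^ 2))
      (t / Real.sqrt (c + t ^ 2)) t := by
    have h1 : HasDerivAt (fun s : ℝ => c + s ^ 2) (2 * t) t := by
      simpa using ((hasDerivAt_pow 2 t).const_add c)
    have := (Real.hasDerivAt_sqrt hA.ne').comp t h1
    refine this.congr_deriv ?_
    field_simp
  have hdb : HasDerivAt (fun s : ℝ => Real.sqrt (h ^ 2 + (c + s ^ 2)))
      (t / Real.sqrt (h ^ 2 + (c + t ^ 2))) t := by
    have h1 : HasDerivAt (fun s : ℝ => h ^ 2 + (c + s ^ 2)) (2 * t) t := by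
      simpa using (((hasDerivAt_pow 2 t).const_add c).const_add (h ^ 2))
    have := (Real.hasDerivAt_sqrt hB.ne').comp t h1
    refine this.congr_deriv ?_
    field_simp
  have hD : HasDerivAt
      (fun s : ℝ => Real.sqrt (c + s ^ 2) * Real.sqrt (h ^ 2 + (c + s ^ 2)))
      (t / Real.sqrt (c + t ^ 2) * Real.sqrt (h ^ 2 + (c + t ^ 2))
        + Real.sqrt (c + t ^ 2) * (t / Real.sqrt (h ^ 2 + (c + t ^ 2)))) t :=
    hda.mul hdb
  have hDne : Real.sqrt (c + t ^ 2) * Real.sqrt (h ^ 2 + (c + t ^ 2)) ≠ 0 := by positivity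
  have hfull := (hasDerivAt_id t).div hD hDne
  simp only [id] at hfull
  rw [show deriv (fun s : ℝ => s / (Real.sqrt (c + s ^ 2) * Real.sqrt (h ^ 2 + (c + s ^ 2)))) t = _ from hfull.deriv]
  rw [div_eq_div_iff (by positivity) (by positivity)]
  generalize Real.sqrt (h ^ 2 + (c + t ^ 2)) = B at hB2 hsB ⊢
  generalize Real.sqrt (c + t ^ 2) = A at hA2 hsA ⊢
  rw [← hB2, ← hA2]
  field_simp
  ring

lemma final_alg (a b h S dd : ℝ) (ha : 0 < a) (hb : 0 < b) (hh : 0 < h)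
    (ha2 : a ^ 2 = S) (hb2 : b ^ 2 = h ^ 2 + S) :
    a * (2 * h ^ 2 + S) / (h ^ 2 * b ^ 3)
      + ((dd - 1) * (S * (h ^ 2 + S)) - S * (h ^ 2 + S) - S * S) / (a ^ 3 * b ^ 3)
      = ((dd - 2) * h ^ 2 + S) / (h ^ 2 * a * b) := by
  subst ha2
  rw [div_add_div _ _ (by positivity) (by positivity), div_eq_div_iff (by positivity) (by positivity)]
  linear_combination (-(((dd - 2) * h ^ 2 + a ^ 2) * h ^ 2 * a ^ 3 * b ^ 4)) * hb2


/-- In the half-space model coordinates, the Euclidean Laplacian of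
`g(z) = arsinh(r_{d-1}/z_d)` equals `((d-2)z_d² + r_{d-1}²)/(z_d² · r_{d-1} · r_d)`. -/
theorem laplacian_arsinh_halfspace (d : ℕ) (hd : 2 ≤ d) (z : Fin d → ℝ)
    (hz : 0 < z ⟨d - 1, by omega⟩)
    (hr : 0 < Real.sqrt (∑ i ∈ Finset.univ.filter (fun i : Fin d => (i : ℕ) < d - 1), z i ^ 2)) :
    (∑ i : Fin d,
        deriv (deriv (fun t : ℝ =>
          Real.arsinh
            (Real.sqrt (∑ j ∈ Finset.univ.filter (fun j : Fin d => (j : ℕ) < d - 1),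
                (Function.update z i t) j ^ 2) /
              (Function.update z i t) ⟨d - 1, by omega⟩))) (z i))
      = (((d : ℝ) - 2) * (z ⟨d - 1, by omega⟩) ^ 2
            + (Real.sqrt (∑ i ∈ Finset.univ.filter (fun i : Fin d => (i : ℕ) < d - 1),
                z i ^ 2)) ^ 2) /
          ((z ⟨d - 1, by omega⟩) ^ 2
            * Real.sqrt (∑ i ∈ Finset.univ.filter (fun i : Fin d => (i : ℕ) < d - 1), z i ^ 2)
            * Real.sqrt (∑ i : Fin d, z i ^ 2)) := by
  set ℓ : Fin d := ⟨d - 1, by omega⟩ with hℓdef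
  set sf : Finset (Fin d) := Finset.univ.filter (fun i : Fin d => (i : ℕ) < d - 1) with hsfdef
  set S : ℝ := ∑ i ∈ sf, z i ^ 2 with hSdef
  have hS : 0 < S := Real.sqrt_pos.1 hr
  have hℓnot : ℓ ∉ sf := by simp [hsfdef, hℓdef]
  have hmem : ∀ i : Fin d, i ∈ sf ↔ i ≠ ℓ := by
    intro i
    have hi := i.isLt
    simp only [hsfdef, Finset.mem_filter, Finset.mem_univ, true_and, Ne, Fin.ext_iff, hℓdef]
    omega
  have huniv : (Finset.univ : Finset (Fin d)) = insert ℓ sf := by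
    ext i
    rcases eq_or_ne i ℓ with rfl | hne
    · simp
    · simp [Finset.mem_insert, (hmem i).2 hne]
  have hcard : sf.card = d - 1 := by
    have h1 : (Finset.univ : Finset (Fin d)).card = d := by simp
    rw [huniv, Finset.card_insert_of_notMem hℓnot] at h1
    omega
  have hT : ∑ i ∈ insert ℓ sf, z i ^ 2 = z ℓ ^ 2 + S := by
    rw [Finset.sum_insert hℓnot, hSdef]
  rw [huniv, Finset.sum_insert hℓnot]
  -- the ℓ term
  have hfunℓ : (fun t : ℝ => Real.arsinh
      (Real.sqrt (∑ j ∈ sf, (Function.update z ℓ t) j ^ 2) / (Function.update z ℓ t) ℓ))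
      = fun t : ℝ => Real.arsinh (Real.sqrt S / t) := by
    funext t
    rw [Function.update_self]
    have h2 : ∑ j ∈ sf, Function.update z ℓ t j ^ 2 = S := by
      rw [hSdef]
      exact Finset.sum_congr rfl fun j hj => by
        rw [Function.update_of_ne ((hmem j).1 hj)]
    rw [h2]
  have hGℓ : deriv (deriv (fun t : ℝ => Real.arsinh
      (Real.sqrt (∑ j ∈ sf, (Function.update z ℓ t) j ^ 2) / (Function.update z ℓ t) ℓ))) (z ℓ)
      = Real.sqrt S * (2 * z ℓ ^ 2 + S) / (z ℓ ^ 2 * Real.sqrt (z ℓ ^ 2 + S) ^ 3) := by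
    rw [hfunℓ, derivA2 (Real.sqrt S) (z ℓ) hr hz, Real.sq_sqrt hS.le]
  -- the other terms
  have hGi : ∀ i ∈ sf, deriv (deriv (fun t : ℝ => Real.arsinh
      (Real.sqrt (∑ j ∈ sf, (Function.update z i t) j ^ 2) / (Function.update z i t) ℓ))) (z i)
      = (S * (z ℓ ^ 2 + S) - z i ^ 2 * (z ℓ ^ 2 + S) - z i ^ 2 * S)
          / (Real.sqrt S ^ 3 * Real.sqrt (z ℓ ^ 2 + S) ^ 3) := by
    intro i hi
    have hine : i ≠ ℓ := (hmem i).1 hi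
    set c : ℝ := ∑ j ∈ sf.erase i, z j ^ 2 with hcdef
    have hc : 0 ≤ c := Finset.sum_nonneg fun j _ => sq_nonneg _
    have hcS : c + z i ^ 2 = S := by
      rw [hcdef, hSdef]
      exact Finset.sum_erase_add sf _ hi
    have hfun : (fun t : ℝ => Real.arsinh
        (Real.sqrt (∑ j ∈ sf, (Function.update z i t) j ^ 2) / (Function.update z i t) ℓ))
        = fun t : ℝ => Real.arsinh (Real.sqrt (c + t ^ 2) / z ℓ) := by
      funext t
      rw [Function.update_of_ne (Ne.symm hine)]
      congr 2
      have hpt : ∀ j, (Function.update z i t) j ^ 2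
          = Function.update (fun j => z j ^ 2) i (t ^ 2) j := by
        intro j
        rcases eq_or_ne j i with rfl | hne
        · simp
        · simp [Function.update_of_ne hne]
      rw [Finset.sum_congr rfl fun j _ => hpt j, Finset.sum_update_of_mem hi, add_comm,
        hcdef, Finset.erase_eq]
    rw [hfun]
    have ht : 0 < c + z i ^ 2 := by rw [hcS]; exact hS
    rw [derivB2 c (z ℓ) hc hz ht, hcS]
  rw [hGℓ, Finset.sum_congr rfl hGi]
  -- sum up the sf-terms
  have hsum : ∑ i ∈ sf, (S * (z ℓ ^ 2 + S) - z i ^ 2 * (z ℓ ^ 2 + S) - z i ^ 2 * S)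
        / (Real.sqrt S ^ 3 * Real.sqrt (z ℓ ^ 2 + S) ^ 3)
      = (((d : ℝ) - 1) * (S * (z ℓ ^ 2 + S)) - S * (z ℓ ^ 2 + S) - S * S)
        / (Real.sqrt S ^ 3 * Real.sqrt (z ℓ ^ 2 + S) ^ 3) := by
    rw [← Finset.sum_div]
    congr 1
    rw [Finset.sum_sub_distrib, Finset.sum_sub_distrib, Finset.sum_const, nsmul_eq_mul,
      ← Finset.sum_mul, ← Finset.sum_mul, ← hSdef, hcard,
      Nat.cast_sub (show 1 ≤ d by omega), Nat.cast_one]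
  rw [hsum, hT, Real.sq_sqrt hS.le]
  exact final_alg (Real.sqrt S) (Real.sqrt (z ℓ ^ 2 + S)) (z ℓ) S ((d : ℝ)) hr
    (Real.sqrt_pos.2 (by positivity)) hz (Real.sq_sqrt hS.le) (Real.sq_sqrt (by positivity))
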